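/- The integral ∫₀¹ r²(1 - 2r²)/√(1 - (1 - 2r²)²) dr is strictly negative. In fact, by integration by parts it equals -(1/4)∫₀¹ √(1 - (1 - 2r²)²) dr < 0. -/

import Mathlib

open Real Set intervalIntegral MeasureTheory

private lemma sqrt_eq_aux {r : ℝ} (h0 : 0 ≤ r) :
    Real.sqrt (1 - (1 - 2 * r ^ 2) ^ 2) = 2 * r * Real.sqrt (1 - r ^ 2) := by
  have : 1 - (1 - 2 * r ^ 2) ^ 2 = (2 * r) ^ 2 * (1 - r ^ 2) := by ring
  rw [this, Real.sqrt_mul (sq_nonneg _), Real.sqrt_sq (by positivity)]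

private lemma eqOn1 : Set.EqOn
    (fun r : ℝ => r ^ 2 * (1 - 2 * r ^ 2) / Real.sqrt (1 - (1 - 2 * r ^ 2) ^ 2))
    (fun r : ℝ => r * (1 - 2 * r ^ 2) / (2 * Real.sqrt (1 - r ^ 2))) (Set.uIcc 0 1) := by
  intro r hr
  rw [Set.uIcc_of_le (by norm_num : (0:ℝ) ≤ 1)] at hr
  obtain ⟨h0, h1⟩ := hr
  simp only
  rw [sqrt_eq_aux h0]
  rcases eq_or_lt_of_le h0 with h | h
  · simp [← h]
  · rw [show r ^ 2 * (1 - 2 * r ^ 2) = r * (r * (1 - 2 * r ^ 2)) by ring,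
      show 2 * r * Real.sqrt (1 - r ^ 2) = r * (2 * Real.sqrt (1 - r ^ 2)) by ring,
      mul_div_mul_left _ _ (ne_of_gt h)]

private lemma integrable1 : IntervalIntegrable
    (fun r : ℝ => r * (1 - 2 * r ^ 2) / (2 * Real.sqrt (1 - r ^ 2))) volume 0 1 := by
  have hg : IntervalIntegrable (fun x : ℝ => (1 - x) ^ (-(1/2) : ℝ)) volume 0 1 := by
    have := (intervalIntegral.intervalIntegrable_rpow' (a := 0) (b := 1)
      (r := (-(1/2) : ℝ)) (by norm_num)).comp_sub_left 1
    simpa using this.symm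
  apply hg.mono_fun'
  · apply Measurable.aestronglyMeasurable
    apply Measurable.div
    · fun_prop
    · fun_prop
  · rw [Filter.EventuallyLE, ae_restrict_iff' measurableSet_uIoc]
    filter_upwards with r hr
    rw [Set.uIoc_of_le (by norm_num : (0:ℝ) ≤ 1)] at hr
    obtain ⟨h0, h1⟩ := hr
    have h0' : (0:ℝ) ≤ r := le_of_lt h0
    simp only [norm_div, Real.norm_eq_abs]
    rcases eq_or_lt_of_le h1 with rfl | h1'
    · simp
    · have hpos : 0 < Real.sqrt (1 - r ^ 2) := Real.sqrt_pos.2 (by nlinarith)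
      rw [div_le_iff₀ (by positivity)]
      have hsq : Real.sqrt (1 - r) ≤ Real.sqrt (1 - r ^ 2) := by
        apply Real.sqrt_le_sqrt; nlinarith
      have hrpow : (1 - r) ^ (-(1/2) : ℝ) = 1 / Real.sqrt (1 - r) := by
        rw [Real.rpow_neg (by linarith), ← Real.sqrt_eq_rpow, one_div]
      have hnum : |r * (1 - 2 * r ^ 2)| ≤ 1 := by
        rw [abs_mul]
        have : |r| ≤ 1 := by rw [abs_of_nonneg h0']; linarith
        have h2 : |1 - 2 * r ^ 2| ≤ 1 := by rw [abs_le]; constructor <;> nlinarith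
        nlinarith [abs_nonneg r, abs_nonneg (1 - 2*r^2)]
      have hsub : 0 < Real.sqrt (1 - r) := Real.sqrt_pos.2 (by linarith)
      calc |r * (1 - 2 * r ^ 2)| ≤ 1 := hnum
        _ ≤ (1 - r) ^ (-(1/2) : ℝ) * Real.sqrt (1 - r) := by
            rw [hrpow, one_div, inv_mul_cancel₀ (ne_of_gt hsub)]
        _ ≤ (1 - r) ^ (-(1/2) : ℝ) * |2 * Real.sqrt (1 - r ^ 2)| := by
            apply mul_le_mul_of_nonneg_left _ (Real.rpow_nonneg (by linarith) _)
            rw [abs_of_nonneg (by positivity)]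
            linarith

private lemma int1 : (∫ r in (0:ℝ)..1, r * (1 - 2 * r ^ 2) / (2 * Real.sqrt (1 - r ^ 2)))
    = -(1/6) := by
  have key := intervalIntegral.integral_eq_sub_of_hasDeriv_right_of_le
    (f := fun r : ℝ => (1/6 + r ^ 2 / 3) * Real.sqrt (1 - r ^ 2))
    (f' := fun r : ℝ => r * (1 - 2 * r ^ 2) / (2 * Real.sqrt (1 - r ^ 2)))
    (by norm_num : (0:ℝ) ≤ 1)
    (by
      apply ContinuousOn.mul
      · fun_prop
      · exact (Real.continuous_sqrt.comp (by fun_prop)).continuousOn)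
    (fun x hx => by
      obtain ⟨h0, h1⟩ := hx
      have hu : (0:ℝ) < 1 - x ^ 2 := by nlinarith
      have hsqrt : HasDerivAt (fun r : ℝ => Real.sqrt (1 - r ^ 2))
          (1 / (2 * Real.sqrt (1 - x ^ 2)) * (-(2 * x))) x := by
        have h1 : HasDerivAt (fun r : ℝ => 1 - r ^ 2) (-(2 * x)) x := by
          simpa using ((hasDerivAt_pow 2 x).const_sub 1)
        exact (Real.hasDerivAt_sqrt (ne_of_gt hu)).comp x h1
      have hmul : HasDerivAt (fun r : ℝ => (1/6 + r ^ 2 / 3) * Real.sqrt (1 - r ^ 2))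
          ((2 * x / 3) * Real.sqrt (1 - x ^ 2)
            + (1/6 + x ^ 2 / 3) * (1 / (2 * Real.sqrt (1 - x ^ 2)) * (-(2 * x)))) x := by
        have hpoly : HasDerivAt (fun r : ℝ => 1/6 + r ^ 2 / 3) (2 * x / 3) x := by
          simpa using (((hasDerivAt_pow 2 x).div_const 3).const_add (1/6 : ℝ))
        exact hpoly.mul hsqrt
      have heq : (2 * x / 3) * Real.sqrt (1 - x ^ 2)
            + (1/6 + x ^ 2 / 3) * (1 / (2 * Real.sqrt (1 - x ^ 2)) * (-(2 * x)))
          = x * (1 - 2 * x ^ 2) / (2 * Real.sqrt (1 - x ^ 2)) := by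
        have hs : Real.sqrt (1 - x ^ 2) ≠ 0 := ne_of_gt (Real.sqrt_pos.2 hu)
        have hsq : Real.sqrt (1 - x ^ 2) ^ 2 = 1 - x ^ 2 := Real.sq_sqrt (le_of_lt hu)
        field_simp
        ring_nf
        linear_combination 24 * hsq
      rw [heq] at hmul
      exact hmul.hasDerivWithinAt)
    integrable1
  rw [key]
  norm_num

private lemma int2 : (∫ r in (0:ℝ)..1, Real.sqrt (1 - (1 - 2 * r ^ 2) ^ 2)) = 2/3 := by
  rw [intervalIntegral.integral_congr (g := fun r : ℝ => 2 * r * Real.sqrt (1 - r ^ 2))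
    (fun r hr => by
      rw [Set.uIcc_of_le (by norm_num : (0:ℝ) ≤ 1)] at hr
      exact sqrt_eq_aux hr.1)]
  have key := intervalIntegral.integral_eq_sub_of_hasDeriv_right_of_le
    (f := fun r : ℝ => -(2/3) * (1 - r ^ 2) * Real.sqrt (1 - r ^ 2))
    (f' := fun r : ℝ => 2 * r * Real.sqrt (1 - r ^ 2))
    (by norm_num : (0:ℝ) ≤ 1)
    (by
      apply ContinuousOn.mul
      · fun_prop
      · exact (Real.continuous_sqrt.comp (by fun_prop)).continuousOn)
    (fun x hx => by
      obtain ⟨h0, h1⟩ := hx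
      have hu : (0:ℝ) < 1 - x ^ 2 := by nlinarith
      have hsqrt : HasDerivAt (fun r : ℝ => Real.sqrt (1 - r ^ 2))
          (1 / (2 * Real.sqrt (1 - x ^ 2)) * (-(2 * x))) x := by
        have h1 : HasDerivAt (fun r : ℝ => 1 - r ^ 2) (-(2 * x)) x := by
          simpa using ((hasDerivAt_pow 2 x).const_sub 1)
        exact (Real.hasDerivAt_sqrt (ne_of_gt hu)).comp x h1
      have hb : HasDerivAt (fun r : ℝ => 1 - r ^ 2) (-(2 * x)) x := by
        simpa using ((hasDerivAt_pow 2 x).const_sub 1)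
      have hpoly : HasDerivAt (fun r : ℝ => -(2/3) * (1 - r ^ 2)) (-(2/3) * (-(2 * x))) x :=
        hb.const_mul (-(2/3) : ℝ)
      have hmul := hpoly.mul hsqrt
      have heq : (-(2/3) * (-(2 * x))) * Real.sqrt (1 - x ^ 2)
            + (-(2/3) * (1 - x ^ 2)) * (1 / (2 * Real.sqrt (1 - x ^ 2)) * (-(2 * x)))
          = 2 * x * Real.sqrt (1 - x ^ 2) := by
        have hs : Real.sqrt (1 - x ^ 2) ≠ 0 := ne_of_gt (Real.sqrt_pos.2 hu)
        have hsq : Real.sqrt (1 - x ^ 2) ^ 2 = 1 - x ^ 2 := Real.sq_sqrt (le_of_lt hu)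
        field_simp
        ring_nf
        linear_combination (-1 : ℝ) * hsq
      rw [heq] at hmul
      exact hmul.hasDerivWithinAt)
    ((((continuous_const.mul continuous_id).mul
        (Real.continuous_sqrt.comp (by fun_prop : Continuous fun r : ℝ => 1 - r ^ 2))) :
      Continuous fun r : ℝ => 2 * r * Real.sqrt (1 - r ^ 2)).intervalIntegrable 0 1)
  rw [key]
  norm_num

theorem stmt3 :
    (∫ r in (0:ℝ)..1, r ^ 2 * (1 - 2 * r ^ 2) / Real.sqrt (1 - (1 - 2 * r ^ 2) ^ 2))
      = -(1 / 4) * ∫ r in (0:ℝ)..1, Real.sqrt (1 - (1 - 2 * r ^ 2) ^ 2) ∧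
    (∫ r in (0:ℝ)..1, r ^ 2 * (1 - 2 * r ^ 2) / Real.sqrt (1 - (1 - 2 * r ^ 2) ^ 2)) < 0 := by
  have h1 : (∫ r in (0:ℝ)..1, r ^ 2 * (1 - 2 * r ^ 2) / Real.sqrt (1 - (1 - 2 * r ^ 2) ^ 2))
      = -(1/6) := by
    rw [intervalIntegral.integral_congr eqOn1]
    exact int1
  rw [h1, int2]
  norm_num
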